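/- If X is a reflexive and locally uniformly rotund Banach space, then the pair (X, 𝕂) has property L_{o,p}: for every ε > 0 and every x ∈ S_X there is η(ε, x) > 0 such that whenever x* ∈ S_{X*} satisfies |x*(x)| > 1 − η(ε, x), there exists x₀ ∈ S_X with |x*(x₀)| = 1 and ‖x₀ − x‖ < ε. -/

import Mathlib

/-- The pair `(X, Y)` has property `L_{o,p}`: for every `ε > 0` and `x ∈ S_X` there is
`η(ε, x) > 0` such that any norm-one operator `T` with `‖T x‖ > 1 - η` attains its norm at a
point `x₀ ∈ S_X` with `‖x₀ - x‖ < ε`. -/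
def HasLop (𝕜 X Y : Type*) [RCLike 𝕜] [NormedAddCommGroup X] [NormedSpace 𝕜 X]
    [NormedAddCommGroup Y] [NormedSpace 𝕜 Y] : Prop :=
  ∀ ε : ℝ, 0 < ε → ∀ x : X, ‖x‖ = 1 →
    ∃ η : ℝ, 0 < η ∧ ∀ T : X →L[𝕜] Y, ‖T‖ = 1 → 1 - η < ‖T x‖ →
      ∃ x₀ : X, ‖x₀‖ = 1 ∧ ‖T x₀‖ = 1 ∧ ‖x₀ - x‖ < ε

/-- The pair `(X, Y)` has property `L_{p,o}`: for every `ε > 0` and norm-one operator `T` there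
is `η(ε, T) > 0` such that whenever `x ∈ S_X` satisfies `‖T x‖ > 1 - η`, there is a norm-one
operator `S` attaining its norm at `x` with `‖S - T‖ < ε`. -/
def HasLpo (𝕜 X Y : Type*) [RCLike 𝕜] [NormedAddCommGroup X] [NormedSpace 𝕜 X]
    [NormedAddCommGroup Y] [NormedSpace 𝕜 Y] : Prop :=
  ∀ ε : ℝ, 0 < ε → ∀ T : X →L[𝕜] Y, ‖T‖ = 1 →
    ∃ η : ℝ, 0 < η ∧ ∀ x : X, ‖x‖ = 1 → 1 - η < ‖T x‖ →
      ∃ S : X →L[𝕜] Y, ‖S‖ = 1 ∧ ‖S x‖ = 1 ∧ ‖S - T‖ < ε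

/-- If  is a reflexive and locally uniformly rotund Banach space, then the
pair  has property . -/
theorem lop_of_reflexive_of_lur (𝕜 X : Type*) [RCLike 𝕜] [NormedAddCommGroup X]
    [NormedSpace 𝕜 X] [CompleteSpace X]
    (hrefl : Function.Surjective (NormedSpace.inclusionInDoubleDual 𝕜 X))
    (hLUR : ∀ x : X, ‖x‖ = 1 → ∀ xn : ℕ → X, (∀ n, ‖xn n‖ = 1) →
      Filter.Tendsto (fun n => ‖xn n + x‖) Filter.atTop (nhds 2) →
      Filter.Tendsto (fun n => ‖xn n - x‖) Filter.atTop (nhds 0)) :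
    HasLop 𝕜 X 𝕜 := by
  intro ε hε x hx
  by_contra h
  push_neg at h
  choose T hT1 hT2 hT3 using fun n : ℕ => h (1/(n+1)) (by positivity)
  -- each T n attains its norm
  have hattain : ∀ n, ∃ z : X, ‖z‖ = 1 ∧ (T n) z = 1 := by
    intro n
    have hTne : T n ≠ 0 := by
      intro h0
      have := hT1 n
      rw [h0] at this
      simp at this
    obtain ⟨F, hF1, hF2⟩ := exists_dual_vector 𝕜 (T n) (norm_ne_zero_iff.mpr hTne)
    obtain ⟨z, hz⟩ := hrefl F
    refine ⟨z, ?_, ?_⟩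
    · have := (NormedSpace.inclusionInDoubleDualLi 𝕜 (E := X)).norm_map z
      rw [show (NormedSpace.inclusionInDoubleDualLi 𝕜 (E := X)) z
          = NormedSpace.inclusionInDoubleDual 𝕜 X z from rfl, hz, hF1] at this
      exact this.symm
    · have : NormedSpace.inclusionInDoubleDual 𝕜 X z (T n) = F (T n) := by rw [hz]
      rw [NormedSpace.dual_def] at this
      rw [this, hF2, hT1 n]
      simp
  choose z hz1 hz2 using hattain
  have hTxne : ∀ n, (T n) x ≠ 0 := by
    intro n h0
    have h1 : (1:ℝ)/(n+1) ≤ 1 := by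
      rw [div_le_one (by positivity)]
      linarith [Nat.cast_nonneg (α := ℝ) n]
    have h2 := hT2 n
    rw [h0, norm_zero] at h2
    linarith
  set c : ℕ → 𝕜 := fun n => (T n) x / (‖(T n) x‖ : 𝕜) with hc
  have hcnorm : ∀ n, ‖c n‖ = 1 := by
    intro n
    rw [hc]
    simp only [norm_div, RCLike.norm_ofReal, abs_norm]
    rw [div_self (by simpa using hTxne n)]
  set w : ℕ → X := fun n => c n • z n with hw
  have hwnorm : ∀ n, ‖w n‖ = 1 := by
    intro n; rw [hw]; simp [norm_smul, hcnorm n, hz1 n]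
  have hTw : ∀ n, (T n) (w n) = c n := by
    intro n; rw [hw]; simp [map_smul, hz2 n]
  have hlow : ∀ n, 2 - 1/(n+1) < ‖w n + x‖ := by
    intro n
    have h1 : ‖(T n) (w n + x)‖ ≤ ‖T n‖ * ‖w n + x‖ := (T n).le_opNorm _
    rw [hT1 n, one_mul] at h1
    have hne : (‖(T n) x‖ : 𝕜) ≠ 0 := by
      exact_mod_cast norm_ne_zero_iff.mpr (hTxne n)
    have hcx : c n * (‖(T n) x‖ : 𝕜) = (T n) x := by
      rw [hc]; field_simp
    have h2 : (T n) (w n + x) = c n * (1 + (‖(T n) x‖ : 𝕜)) := by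
      rw [map_add, hTw n, mul_add, mul_one, hcx]
    have h3 : ‖(T n) (w n + x)‖ = 1 + ‖(T n) x‖ := by
      rw [h2, norm_mul, hcnorm n, one_mul]
      rw [show ((1:𝕜) + (‖(T n) x‖ : 𝕜)) = ((1 + ‖(T n) x‖ : ℝ) : 𝕜) by push_cast; ring]
      rw [RCLike.norm_ofReal, abs_of_nonneg (by positivity)]
    have := hT2 n
    linarith [h1, h3 ▸ h1]
  have hup : ∀ n, ‖w n + x‖ ≤ 2 := by
    intro n
    calc ‖w n + x‖ ≤ ‖w n‖ + ‖x‖ := norm_add_le _ _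
    _ = 2 := by rw [hwnorm n, hx]; norm_num
  have htend : Filter.Tendsto (fun n => ‖w n + x‖) Filter.atTop (nhds 2) := by
    have hl : Filter.Tendsto (fun n : ℕ => 2 - 1/((n:ℝ)+1)) Filter.atTop (nhds 2) := by
      have := tendsto_one_div_add_atTop_nhds_zero_nat (𝕜 := ℝ)
      have h2 := (tendsto_const_nhds (x := (2:ℝ)) (f := Filter.atTop (α := ℕ))).sub this
      simpa using h2
    exact tendsto_of_tendsto_of_tendsto_of_le_of_le hl tendsto_const_nhds
      (fun n => (hlow n).le) hup
  have hdiff := hLUR x hx w hwnorm htend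
  have hev : ∀ᶠ n in Filter.atTop, ‖w n - x‖ < ε := hdiff.eventually (gt_mem_nhds hε)
  obtain ⟨n, hn⟩ := hev.exists
  exact (hT3 n (w n) (hwnorm n) (by rw [hTw n]; exact hcnorm n)).not_gt hn
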